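/- Let f be an edge q-colouring of a graph G and let v be a vertex with |f(v)| = q adjacent to a pendant vertex u (a degree-1 vertex). Define f' by deleting u and recolouring all edges of colour f(uv) to some other colour c ∈ f(v) with c ≠ f(uv) (if such c exists). Then f' is an edge q-colouring of G − u using at least (number of colours of f) − 1 colours, and |f'(v)| ≤ q − 1 if f(uv) ∉ f'(v). -/

import Mathlib

open Finset

variable {V : Type*}

/-- The set of colours appearing on edges incident to vertex `v`. -/
def vColors (G : SimpleGraph V) (f : V → V → ℕ) (v : V) : Set ℕ :=
  {c | ∃ u, G.Adj v u ∧ f v u = c}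

/-- The set of colours used on edges of `G`. -/
def colorsOf (G : SimpleGraph V) (f : V → V → ℕ) : Set ℕ :=
  {c | ∃ u v, G.Adj u v ∧ f u v = c}

/-- An edge `q`-colouring: a symmetric assignment of colours to edges such that
every vertex is incident with at most `q` distinct colours. -/
def IsEdgeQColoring (G : SimpleGraph V) (q : ℕ) (f : V → V → ℕ) : Prop :=
  (∀ u v, f u v = f v u) ∧ ∀ v, (vColors G f v).ncard ≤ q

/-- `S`-composability: every vertex of `S` sees at most `q - 1` non-zero colours. -/
def IsComposable (G : SimpleGraph V) (q : ℕ) (S : Set V) (f : V → V → ℕ) : Prop :=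
  ∀ v ∈ S, ((vColors G f v) \ {0}).ncard ≤ q - 1

/-- `χ'_q(G, S)`: maximum number of non-zero colours of an `S`-composable edge
`q`-colouring of `G`. -/
noncomputable def chiq (G : SimpleGraph V) (q : ℕ) (S : Set V) : ℕ :=
  sSup {k | ∃ f, IsEdgeQColoring G q f ∧ IsComposable G q S f ∧
    ((colorsOf G f) \ {0}).ncard = k}

/-- `χ'_q(G)`: maximum number of distinct colours of an edge `q`-colouring of `G`. -/
noncomputable def chimax (G : SimpleGraph V) (q : ℕ) : ℕ :=
  sSup {k | ∃ f, IsEdgeQColoring G q f ∧ (colorsOf G f).ncard = k}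

/-- `M` is a matching in `G`: a set of edges, pairwise not sharing a vertex. -/
def IsMatchingSet (G : SimpleGraph V) (M : Set (Sym2 V)) : Prop :=
  M ⊆ G.edgeSet ∧ ∀ e ∈ M, ∀ e' ∈ M, e ≠ e' → ∀ v, v ∈ e → v ∉ e'

/-- `M` is a maximal matching in `G`. -/
def IsMaximalMatchingSet (G : SimpleGraph V) (M : Set (Sym2 V)) : Prop :=
  IsMatchingSet G M ∧ ∀ e ∈ G.edgeSet, ∃ e' ∈ M, ∃ v, v ∈ e ∧ v ∈ e'

/-- `X` is a vertex cover of `G`. -/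
def IsVertexCover (G : SimpleGraph V) (X : Set V) : Prop :=
  ∀ e ∈ G.edgeSet, ∃ v ∈ X, v ∈ e

/-- A layering of `G`. -/
def IsLayering (G : SimpleGraph V) (lam : V → ℤ) : Prop :=
  ∀ u v, G.Adj u v → |lam u - lam v| ≤ 1

/-- The graph part `G_m` of the `(λ, r, m)`-stratification: delete all edges `uv`
with `λ(u) ≡ m` and `λ(v) ≡ m + 1 (mod r)`. -/
def stratGraph (G : SimpleGraph V) (lam : V → ℤ) (r m : ℤ) : SimpleGraph V where
  Adj u v := G.Adj u v ∧
    ¬ ((lam u ≡ m [ZMOD r] ∧ lam v ≡ m + 1 [ZMOD r]) ∨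
       (lam v ≡ m [ZMOD r] ∧ lam u ≡ m + 1 [ZMOD r]))
  symm := ⟨by
    intro u v h
    exact ⟨h.1.symm, fun hc => h.2 hc.symm⟩⟩
  loopless := ⟨fun v h => G.loopless.irrefl v h.1⟩

/-- The set `S_m` of the `(λ, r, m)`-stratification: vertices incident with deleted
edges. -/
def stratSet (G : SimpleGraph V) (lam : V → ℤ) (r m : ℤ) : Set V :=
  {v | ∃ u, G.Adj v u ∧ ¬ (stratGraph G lam r m).Adj v u}


lemma vColors_finite [Fintype V] (G : SimpleGraph V) (f : V → V → ℕ) (v : V) :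
    (vColors G f v).Finite := by
  apply Set.Finite.subset (Set.finite_range (f v))
  rintro d ⟨w, _, rfl⟩; exact ⟨w, rfl⟩

lemma colorsOf_finite [Fintype V] (G : SimpleGraph V) (f : V → V → ℕ) :
    (colorsOf G f).Finite := by
  apply Set.Finite.subset (Set.finite_range (fun p : V × V => f p.1 p.2))
  rintro d ⟨a, b, _, rfl⟩; exact ⟨(a, b), rfl⟩

/-- merging the colour of the pendant edge `uv` into another colour
`c` seen at `v` and deleting the pendant vertex `u` yields an edge `q`-colouring
of `G − u` losing at most one colour; moreover if `f(uv)` no longer appears at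
`v`, then `v` sees at most `q − 1` colours. -/
theorem stmt15 [Fintype V] [DecidableEq V] (G : SimpleGraph V) (q : ℕ)
    (f : V → V → ℕ) (hf : IsEdgeQColoring G q f) (u v : V) (hadj : G.Adj v u)
    (hdeg : (G.neighborSet u).ncard = 1) (hsat : (vColors G f v).ncard = q)
    (c : ℕ) (hc : c ∈ vColors G f v) (hcne : c ≠ f v u) :
    IsEdgeQColoring (G.comap (fun w : {w : V // w ≠ u} => (w : V))) q
      (fun a b : {w : V // w ≠ u} =>
        if f (a : V) (b : V) = f v u then c else f (a : V) (b : V)) ∧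
    (colorsOf G f).ncard - 1 ≤
      (colorsOf (G.comap (fun w : {w : V // w ≠ u} => (w : V)))
        (fun a b : {w : V // w ≠ u} =>
          if f (a : V) (b : V) = f v u then c else f (a : V) (b : V))).ncard ∧
    (f v u ∉ vColors (G.comap (fun w : {w : V // w ≠ u} => (w : V)))
        (fun a b : {w : V // w ≠ u} =>
          if f (a : V) (b : V) = f v u then c else f (a : V) (b : V)) ⟨v, hadj.ne⟩ →
      (vColors (G.comap (fun w : {w : V // w ≠ u} => (w : V)))
        (fun a b : {w : V // w ≠ u} =>
          if f (a : V) (b : V) = f v u then c else f (a : V) (b : V)) ⟨v, hadj.ne⟩).ncard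
        ≤ q - 1) := by
  obtain ⟨hsymm, hbound⟩ := hf
  set k := f v u with hk
  set G' := G.comap (fun w : {w : V // w ≠ u} => (w : V)) with hG'
  set f' := (fun a b : {w : V // w ≠ u} =>
      if f (a : V) (b : V) = k then c else f (a : V) (b : V)) with hf'
  -- the only neighbour of u is v
  obtain ⟨a₀, ha₀⟩ := Set.ncard_eq_one.mp hdeg
  have hvmem : v ∈ G.neighborSet u := hadj.symm
  have hNu : G.neighborSet u = {v} := by
    rw [ha₀] at hvmem ⊢; rw [Set.mem_singleton_iff] at hvmem; rw [hvmem]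
  have honly : ∀ b, G.Adj u b → b = v := by
    intro b hb
    have : b ∈ G.neighborSet u := hb
    rw [hNu] at this; exact this
  have hadjG' : ∀ a b : {w : V // w ≠ u}, G'.Adj a b ↔ G.Adj (a : V) (b : V) :=
    fun a b => Iff.rfl
  have hkv : k ∈ vColors G f v := ⟨u, hadj, rfl⟩
  refine ⟨⟨?_, ?_⟩, ?_, ?_⟩
  · intro a b; simp only [hf', hsymm (a : V) (b : V)]
  · intro a
    by_cases hka : k ∈ vColors G f (a : V)
    · have hsub : vColors G' f' a ⊆ insert c (vColors G f (a : V) \ {k}) := by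
        rintro d ⟨b, hb, rfl⟩
        simp only [hf']
        split_ifs with h
        · exact Set.mem_insert _ _
        · exact Set.mem_insert_of_mem _ ⟨⟨(b : V), hb, rfl⟩, h⟩
      calc (vColors G' f' a).ncard
          ≤ (insert c (vColors G f (a : V) \ {k})).ncard :=
            Set.ncard_le_ncard hsub (((vColors_finite G f _).diff).insert c)
        _ ≤ (vColors G f (a : V) \ {k}).ncard + 1 := Set.ncard_insert_le _ _
        _ = (vColors G f (a : V)).ncard - 1 + 1 := by
            rw [Set.ncard_diff_singleton_of_mem hka]
        _ ≤ q := by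
            have h1 : 0 < (vColors G f (a : V)).ncard :=
              (Set.ncard_pos (vColors_finite G f _)).mpr ⟨k, hka⟩
            have := hbound (a : V); omega
    · have hsub : vColors G' f' a ⊆ vColors G f (a : V) := by
        rintro d ⟨b, hb, rfl⟩
        simp only [hf']
        split_ifs with h
        · exact absurd ⟨(b : V), hb, h⟩ hka
        · exact ⟨(b : V), hb, rfl⟩
      exact le_trans (Set.ncard_le_ncard hsub (vColors_finite G f _)) (hbound _)
  · have hsub : colorsOf G f \ {k} ⊆ colorsOf G' f' := by
      rintro d ⟨⟨a, b, hab, rfl⟩, hdk⟩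
      rw [Set.mem_singleton_iff] at hdk
      have hau : a ≠ u := by
        intro h
        apply hdk
        have hb := honly b (h ▸ hab)
        rw [h, hb]
        exact hsymm u v
      have hbu : b ≠ u := by
        intro h
        apply hdk
        have ha := honly a (h ▸ hab.symm)
        rw [h, ha]
      refine ⟨⟨a, hau⟩, ⟨b, hbu⟩, hab, ?_⟩
      simp only [hf', if_neg hdk]
    have h1 : colorsOf G f ⊆ insert k (colorsOf G' f') := by
      intro d hd
      by_cases hdk : d = k
      · exact hdk ▸ Set.mem_insert _ _
      · exact Set.mem_insert_of_mem _ (hsub ⟨hd, hdk⟩)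
    have := Set.ncard_le_ncard h1 ((colorsOf_finite G' f').insert k)
    have := Set.ncard_insert_le k (colorsOf G' f')
    omega
  · intro hknot
    have hsub : vColors G' f' ⟨v, hadj.ne⟩ ⊆ vColors G f v \ {k} := by
      rintro d ⟨b, hb, rfl⟩
      refine ⟨?_, fun hdk => hknot ?_⟩
      · simp only [hf']
        split_ifs with h
        · exact hc
        · exact ⟨(b : V), hb, rfl⟩
      · rw [Set.mem_singleton_iff] at hdk
        exact ⟨b, hb, hdk⟩
    calc (vColors G' f' ⟨v, hadj.ne⟩).ncard
        ≤ (vColors G f v \ {k}).ncard :=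
          Set.ncard_le_ncard hsub ((vColors_finite G f v).diff)
      _ = q - 1 := by
          rw [Set.ncard_diff_singleton_of_mem hkv, hsat]
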